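/- Let p be an odd prime and i ≥ 1 an integer. Then Σ_{j=0}^{p-2i} B_j · C(j+2i-1, j) · [p, j+2i] · p^j = 0, where the equality holds in the rational numbers (the sum is finite since [p, m] = 0 for m > p). -/

import Mathlib

/-- Unsigned Stirling numbers of the first kind (cycle Stirling numbers). -/
def stirling1 : ℕ → ℕ → ℕ
  | 0, 0 => 1
  | 0, _ + 1 => 0
  | _ + 1, 0 => 0
  | n + 1, k + 1 => n * stirling1 n (k + 1) + stirling1 n k

section Aux

open Polynomial Finset

lemma stirling1_eq_zero : ∀ n k, n < k → stirling1 n k = 0 := by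
  intro n
  induction n with
  | zero => intro k hk; match k, hk with
    | k + 1, _ => rfl
  | succ n ih =>
    intro k hk
    match k, hk with
    | k + 1, hk =>
      show n * stirling1 n (k+1) + stirling1 n k = 0
      rw [ih (k+1) (by omega), ih k (by omega)]
      simp

lemma prod_coeff (c : ℚ) : ∀ (m k : ℕ),
    (∏ j ∈ range m, (C c * X + C (j : ℚ))).coeff k = stirling1 m k * c ^ k := by
  intro m
  induction m with
  | zero =>
    intro k
    cases k with
    | zero => simp [stirling1]
    | succ k => simp [stirling1, coeff_one]
  | succ m ih =>
    intro k
    rw [prod_range_succ]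
    have expand : (∏ j ∈ range m, (C c * X + C (j : ℚ))) * (C c * X + C (m : ℚ))
        = C c * ((∏ j ∈ range m, (C c * X + C (j : ℚ))) * X)
          + C (m : ℚ) * (∏ j ∈ range m, (C c * X + C (j : ℚ))) := by ring
    rw [expand]
    cases k with
    | zero =>
      rw [coeff_add, coeff_C_mul, coeff_C_mul, mul_coeff_zero, coeff_X_zero, mul_zero,
        mul_zero, zero_add, ih]
      show (m:ℚ) * ((stirling1 m 0 : ℚ) * c ^ 0) = ((0 : ℕ) : ℚ) * c ^ 0
      cases m with
      | zero => simp
      | succ m => show _ = ((0:ℕ):ℚ) * c ^ 0; simp [show stirling1 (m+1) 0 = 0 from rfl]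
    | succ k =>
      rw [coeff_add, coeff_C_mul, coeff_C_mul, coeff_mul_X, ih, ih]
      show c * ((stirling1 m k : ℚ) * c ^ k) + (m:ℚ) * ((stirling1 m (k+1) : ℚ) * c^(k+1))
          = (stirling1 (m+1) (k+1) : ℚ) * c ^ (k+1)
      show _ = ((m * stirling1 m (k + 1) + stirling1 m k : ℕ) : ℚ) * c ^ (k+1)
      push_cast
      ring

lemma bern_coeff (k t : ℕ) :
    (Polynomial.bernoulli k).coeff t = _root_.bernoulli (k - t) * (k.choose t : ℚ) := by
  rw [Polynomial.bernoulli_def, finset_sum_coeff]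
  simp only [coeff_monomial]
  rw [Finset.sum_ite_eq' (range (k+1)) t (fun i => _root_.bernoulli (k - i) * (k.choose i : ℚ))]
  split_ifs with h
  · rfl
  · rw [Nat.choose_eq_zero_of_lt (by simpa using h), Nat.cast_zero, mul_zero]

lemma coeff_comp_scale (P : ℚ[X]) (c : ℚ) (k : ℕ) :
    (P.comp (C c * X)).coeff k = c ^ k * P.coeff k := by
  induction P using Polynomial.induction_on' with
  | add p q hp hq => simp [add_comp, hp, hq, mul_add]
  | monomial m a =>
    rw [monomial_comp]
    have : (C c * X) ^ m = C (c ^ m) * X ^ m := by rw [mul_pow, C_pow]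
    rw [this, ← mul_assoc, ← C_mul, coeff_C_mul, coeff_X_pow, coeff_monomial]
    by_cases h : k = m
    · subst h; simp [mul_comm]
    · rw [if_neg h, if_neg (fun hh => h hh.symm)]; simp

lemma bern_eval (m : ℕ) (h : ℚ) : (Polynomial.bernoulli m).eval h
    = ∑ i ∈ range (m + 1), _root_.bernoulli i * (m.choose i : ℚ) * h ^ (m - i) := by
  rw [Polynomial.bernoulli, eval_finset_sum]
  simp [eval_monomial]

lemma const_of_deriv_zero {P Q : ℚ[X]} (hd : derivative P = derivative Q)
    (he : P.eval 0 = Q.eval 0) : P = Q := by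
  have h1 : derivative (P - Q) = 0 := by rw [derivative_sub, hd, sub_self]
  have h2 := Polynomial.eq_C_of_natDegree_eq_zero
    (Polynomial.natDegree_eq_zero_of_derivative_eq_zero h1)
  have h3 : (P - Q).coeff 0 = 0 := by
    rw [Polynomial.coeff_zero_eq_eval_zero, eval_sub, he, sub_self]
  rw [h3, map_zero] at h2
  have := sub_eq_zero.mp h2
  linear_combination (norm := ring_nf) this

lemma appell (h : ℚ) : ∀ m : ℕ, (Polynomial.bernoulli m).comp (X + C h)
    = ∑ j ∈ range (m + 1), C ((m.choose j : ℚ) * h ^ (m - j)) * Polynomial.bernoulli j := by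
  intro m
  induction m with
  | zero => simp
  | succ m ih =>
    apply const_of_deriv_zero
    · rw [derivative_comp, Polynomial.derivative_bernoulli_add_one, derivative_add,
        derivative_X, derivative_C, add_zero, one_mul, mul_comp, add_comp, natCast_comp, one_comp, ih,
        derivative_sum]
      rw [Finset.sum_range_succ' (fun j => derivative
        (C (((m+1).choose j : ℚ) * h ^ (m + 1 - j)) * Polynomial.bernoulli j)) (m+1)]
      simp only [derivative_C_mul, Polynomial.derivative_bernoulli, Nat.cast_succ]
      rw [Finset.mul_sum]
      simp only [Nat.add_sub_cancel, Nat.succ_sub_succ_eq_sub, Nat.cast_zero, zero_mul,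
        mul_zero, add_zero, Nat.cast_add, Nat.cast_one, Nat.add_sub_cancel_left]
      apply Finset.sum_congr rfl
      intro j _
      have key : ((m+1).choose (j+1) : ℚ) * (j+1) = (m+1) * (m.choose j : ℚ) := by
        exact_mod_cast congrArg (Nat.cast : ℕ → ℚ) (Nat.add_one_mul_choose_eq m j).symm
      rw [Nat.sub_zero,
        show ((m : ℚ[X]) + 1) = C ((m : ℚ) + 1) by rw [map_add, map_one, C_eq_natCast],
        show ((j : ℚ[X]) + 1) = C ((j : ℚ) + 1) by rw [map_add, map_one, C_eq_natCast],
        ← mul_assoc, ← mul_assoc, ← C_mul, ← C_mul]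
      congr 1
      rw [C_inj]
      linear_combination (- h ^ (m - j)) * key
    · rw [eval_comp]
      simp only [eval_add, eval_X, eval_C, zero_add, eval_finset_sum, eval_mul,
        Polynomial.bernoulli_eval_zero]
      rw [bern_eval]
      apply Finset.sum_congr rfl
      intro j _
      ring

lemma bernoulli'_eq_neg_pow (n : ℕ) : bernoulli' n = (-1 : ℚ) ^ n * _root_.bernoulli n := by
  rcases Nat.even_or_odd n with he | ho
  · rw [he.neg_one_pow, one_mul]
    rcases Nat.eq_zero_or_pos n with rfl | hn
    · simp
    · rw [_root_.bernoulli_eq_bernoulli'_of_ne_one]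
      rintro rfl
      exact (Nat.not_even_iff_odd.mpr ⟨0, rfl⟩) he
  · rcases eq_or_ne n 1 with rfl | h1
    · simp [bernoulli'_one, _root_.bernoulli_one]; norm_num
    · have hlt : 1 < n := by
        rcases ho with ⟨k, rfl⟩; omega
      rw [_root_.bernoulli_eq_bernoulli'_of_ne_one h1, _root_.bernoulli'_eq_zero_of_odd ho hlt, mul_zero]

lemma bern_reflect : ∀ m : ℕ, (Polynomial.bernoulli m).comp (C 1 - X)
    = C ((-1 : ℚ) ^ m) * Polynomial.bernoulli m := by
  intro m
  induction m with
  | zero => simp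
  | succ m ih =>
    apply const_of_deriv_zero
    · rw [derivative_comp, Polynomial.derivative_bernoulli_add_one, derivative_sub,
        derivative_X, derivative_C, zero_sub, mul_comp, add_comp, natCast_comp, one_comp, ih,
        derivative_C_mul, Polynomial.derivative_bernoulli_add_one]
      rw [show ((m : ℚ[X]) + 1) = C ((m : ℚ) + 1) by rw [map_add, map_one, C_eq_natCast]]
      rw [show ((-1 : ℚ)^(m+1)) = (-1) * (-1)^m by ring]
      rw [map_mul, show (C (-1 : ℚ)) = -1 by simp]
      ring
    · rw [eval_comp, eval_sub, eval_C, eval_X, sub_zero, Polynomial.bernoulli_eval_one,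
        eval_mul, eval_C, Polynomial.bernoulli_eval_zero]
      exact bernoulli'_eq_neg_pow (m+1)

lemma psi_shift (h : ℚ) (N : ℕ) (P : ℚ[X]) (hN : P.natDegree < N) :
    (∑ k ∈ range N, C (P.coeff k) * Polynomial.bernoulli k).comp (X + C h)
      = ∑ k ∈ range N, C ((P.comp (X + C h)).coeff k) * Polynomial.bernoulli k := by
  have hc : ∀ j : ℕ, (P.comp (X + C h)).coeff j
      = ∑ k ∈ range N, P.coeff k * ((k.choose j : ℚ) * h ^ (k - j)) := by
    intro j
    conv_lhs => rw [P.as_sum_range' N hN]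
    rw [Polynomial.sum_comp, finset_sum_coeff]
    apply Finset.sum_congr rfl
    intro k _
    rw [monomial_comp, coeff_C_mul, coeff_X_add_C_pow]
    ring
  rw [Polynomial.sum_comp]
  have step : ∀ k ∈ range N, (C (P.coeff k) * Polynomial.bernoulli k).comp (X + C h)
      = ∑ j ∈ range N, C (P.coeff k * ((k.choose j : ℚ) * h ^ (k - j)))
          * Polynomial.bernoulli j := by
    intro k hk
    rw [mul_comp, C_comp, appell]
    rw [Finset.sum_subset (Finset.range_subset_range.mpr (Finset.mem_range.mp hk))]
    · rw [Finset.mul_sum]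
      apply Finset.sum_congr rfl
      intro j _
      rw [← mul_assoc, ← C_mul]
    · intro j _ hj
      rw [Nat.choose_eq_zero_of_lt (by simpa using hj), Nat.cast_zero, zero_mul, map_zero,
        zero_mul]
  rw [Finset.sum_congr rfl step, Finset.sum_comm]
  apply Finset.sum_congr rfl
  intro j _
  rw [hc, ← Finset.sum_mul]
  congr 1
  rw [map_sum]

theorem bernoulli_stirling1_aux (p : ℕ) (hp : p.Prime) (hodd : Odd p)
    (i : ℕ) (hi : 1 ≤ i) :
    ∑ j ∈ Finset.range (p - 2 * i + 1),
      _root_.bernoulli j * ((j + 2 * i - 1).choose j) * stirling1 p (j + 2 * i) * (p : ℚ) ^ j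
      = 0 := by
  by_cases hle : 2 * i ≤ p
  swap
  · apply Finset.sum_eq_zero
    intro j _
    rw [stirling1_eq_zero p (j + 2 * i) (by omega), Nat.cast_zero]
    ring
  have hp1 : 1 ≤ p := hp.one_lt.le.trans' (by norm_num)
  -- the shifted product polynomial G
  set G : ℚ[X] := C (p : ℚ) * ∏ j ∈ range (p - 1), (C (p : ℚ) * X + C ((j + 1 : ℕ) : ℚ))
    with hG
  have hF : (∏ j ∈ range p, (C (p : ℚ) * X + C ((j : ℕ) : ℚ))) = X * G := by
    have := Finset.prod_range_succ' (fun j => (C (p : ℚ) * X + C ((j : ℕ) : ℚ))) (p - 1)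
    rw [show p - 1 + 1 = p from by omega] at this
    rw [this, hG]
    simp only [Nat.cast_zero, map_zero, add_zero]
    ring
  have hGcoeff : ∀ k, G.coeff k = (stirling1 p (k + 1) : ℚ) * (p : ℚ) ^ (k + 1) := by
    intro k
    have := prod_coeff (p : ℚ) p (k + 1)
    rw [hF, coeff_X_mul] at this
    exact this
  have hGdeg : G.natDegree < p := by
    have hb : ∀ j ∈ range (p - 1), (C (p : ℚ) * X + C ((j + 1 : ℕ) : ℚ)).natDegree ≤ 1 := by
      intro j _
      refine (natDegree_add_le _ _).trans ?_
      simp only [natDegree_C, max_le_iff]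
      exact ⟨(natDegree_C_mul_le _ _).trans (by simp), by norm_num⟩
    have h2 : (∏ j ∈ range (p - 1), (C (p : ℚ) * X + C ((j + 1 : ℕ) : ℚ))).natDegree
        ≤ p - 1 := by
      refine (natDegree_prod_le _ _).trans ?_
      have h := Finset.sum_le_card_nsmul (range (p - 1)) _ 1 hb
      simpa using h
    calc G.natDegree ≤ 0 + (∏ j ∈ range (p - 1),
          (C (p : ℚ) * X + C ((j + 1 : ℕ) : ℚ))).natDegree := by
          rw [hG, zero_add]; exact natDegree_C_mul_le _ _
      _ ≤ p - 1 := by rw [zero_add]; exact h2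
      _ < p := by omega
  have hGsym : G.comp (C (-1) - X) = G := by
    rw [hG, mul_comp, C_comp, Polynomial.prod_comp]
    congr 1
    have hstep : ∀ j ∈ range (p - 1), (C (p:ℚ) * X + C ((j + 1 : ℕ) : ℚ)).comp (C (-1) - X)
        = (-1) * (C (p:ℚ) * X + C ((p - 1 - 1 - j + 1 : ℕ) : ℚ)) := by
      intro j hj
      have hj' : j ≤ p - 2 := by have := Finset.mem_range.mp hj; omega
      rw [add_comp, mul_comp, C_comp, C_comp, X_comp]
      have : ((p - 1 - 1 - j + 1 : ℕ) : ℚ) = (p : ℚ) - 1 - (j : ℚ) := by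
        have h3 : (p - 1 - 1 - j + 1 : ℕ) = p - 1 - j := by omega
        rw [h3, Nat.cast_sub (by omega), Nat.cast_sub (by omega), Nat.cast_one]
      rw [this]
      simp only [Nat.cast_add, Nat.cast_one, map_add, map_sub, map_neg, map_one]
      ring
    rw [Finset.prod_congr rfl hstep, Finset.prod_mul_distrib]
    rw [Finset.prod_const, Finset.card_range, Finset.prod_range_reflect
      (fun j => (C (p:ℚ) * X + C ((j + 1 : ℕ) : ℚ))) (p - 1)]
    have : Even (p - 1) := by
      rcases hodd with ⟨k, hk⟩; exact ⟨k, by omega⟩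
    rw [this.neg_one_pow, one_mul]
  -- the Bernoulli transform W of G
  set W : ℚ[X] := ∑ k ∈ range p, C (G.coeff k) * Polynomial.bernoulli k with hW
  have hW1 : W.comp (C 1 - X)
      = ∑ k ∈ range p, C ((G.comp (C (-1) * X)).coeff k) * Polynomial.bernoulli k := by
    rw [hW, Polynomial.sum_comp]
    apply Finset.sum_congr rfl
    intro k _
    rw [mul_comp, C_comp, bern_reflect, coeff_comp_scale, ← mul_assoc, ← C_mul,
      mul_comm (G.coeff k)]
  have hcomp : G.comp (C (-1) * X) = G.comp (X + C (-1)) := by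
    conv_rhs => rw [show (X + C (-1) : ℚ[X]) = (C (-1 : ℚ) - X).comp (C (-1 : ℚ) * X) by
      rw [sub_comp, C_comp, X_comp]; simp only [map_neg, map_one]; ring]
    rw [← Polynomial.comp_assoc, hGsym]
  have hWsym : W.comp (C (-1) * X) = W := by
    have hE : W.comp (C 1 - X) = W.comp (X + C (-1)) := by
      rw [hW1, hcomp, psi_shift (-1) p G hGdeg]
    have := congrArg (fun Q => Q.comp (X + C 1)) hE
    simp only [Polynomial.comp_assoc] at this
    rw [show ((C 1 - X : ℚ[X]).comp (X + C 1)) = C (-1) * X by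
      rw [sub_comp, C_comp, X_comp]; simp only [map_neg, map_one]; ring] at this
    rw [show ((X + C (-1) : ℚ[X]).comp (X + C 1)) = X by
      rw [add_comp, C_comp, X_comp]; simp only [map_neg, map_one]; ring] at this
    rw [this, comp_X]
  -- odd coefficients of W vanish
  have hodd_coeff : W.coeff (2 * i - 1) = 0 := by
    have h1 : (W.comp (C (-1) * X)).coeff (2 * i - 1) = W.coeff (2 * i - 1) := by
      rw [hWsym]
    rw [coeff_comp_scale] at h1
    have h2 : ((-1 : ℚ)) ^ (2 * i - 1) = -1 := by
      have : Odd (2 * i - 1) := by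
        rcases Nat.even_or_odd (2*i-1) with he | ho
        · exfalso; rcases he with ⟨k, hk⟩; omega
        · exact ho
      exact this.neg_one_pow
    rw [h2] at h1
    linarith [h1]
  -- expand the coefficient
  have hexpand : W.coeff (2 * i - 1)
      = (∑ j ∈ Finset.range (p - 2 * i + 1),
          _root_.bernoulli j * ((j + 2 * i - 1).choose j) * stirling1 p (j + 2 * i)
            * (p : ℚ) ^ j)
        * (p : ℚ) ^ (2 * i) := by
    rw [hW, finset_sum_coeff]
    simp only [coeff_C_mul, bern_coeff, hGcoeff]
    rw [Finset.range_eq_Ico, ← Finset.sum_Ico_consecutive _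
      (by omega : 0 ≤ 2 * i - 1) (by omega : 2 * i - 1 ≤ p)]
    have hz : (∑ k ∈ Finset.Ico 0 (2 * i - 1), (stirling1 p (k + 1) : ℚ) * (p:ℚ) ^ (k+1)
        * (_root_.bernoulli (k - (2 * i - 1)) * (k.choose (2 * i - 1) : ℚ))) = 0 := by
      apply Finset.sum_eq_zero
      intro k hk
      rw [Nat.choose_eq_zero_of_lt (by simpa using (Finset.mem_Ico.mp hk).2), Nat.cast_zero,
        mul_zero, mul_zero]
    rw [hz, zero_add, Finset.sum_Ico_eq_sum_range]
    rw [show p - (2 * i - 1) = p - 2 * i + 1 from by omega]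
    rw [Finset.sum_mul]
    rw [Finset.range_eq_Ico]
    apply Finset.sum_congr rfl
    intro j _
    rw [show 2 * i - 1 + j - (2 * i - 1) = j from by omega]
    rw [show 2 * i - 1 + j + 1 = j + 2 * i from by omega]
    rw [show (2 * i - 1 + j).choose (2 * i - 1) = (j + 2 * i - 1).choose j from by
      rw [show 2 * i - 1 + j = j + 2 * i - 1 from by omega]
      rw [← Nat.choose_symm (by omega : j ≤ j + 2 * i - 1),
        show j + 2 * i - 1 - j = 2 * i - 1 from by omega]]
    rw [pow_add]
    ring
  rw [hexpand] at hodd_coeff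
  rcases mul_eq_zero.mp hodd_coeff with h | h
  · exact h
  · exact absurd h (pow_ne_zero _ (by exact_mod_cast hp.pos.ne'))

end Aux

theorem bernoulli_stirling1_sum_eq_zero (p : ℕ) (hp : p.Prime) (hodd : Odd p)
    (i : ℕ) (hi : 1 ≤ i) :
    ∑ j ∈ Finset.range (p - 2 * i + 1),
      bernoulli j * ((j + 2 * i - 1).choose j) * stirling1 p (j + 2 * i) * (p : ℚ) ^ j
      = 0 :=
  bernoulli_stirling1_aux p hp hodd i hi
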